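/- Consider a pure death chain (Q_t) on the nonnegative integers where the jump rate from i to i−1 is at least c·|A|^{1−α}·i^α for constants c > 0, α > 1 and a parameter |A| ≥ 1. Then for K with Σ_{k>K} (c|A|^{1−α}k^α)^{−1} < t₀/2, one has P(Q_{t₀} > K starting from any initial state) ≤ exp(−c₃K) for some c₃ > 0 depending on c, α; in particular, taking K = C t₀^{−1/(α−1)} |A| for C large (depending on c, α) gives P(Q_{t₀} > C t₀^{−1/(α−1)}|A|) ≤ exp(−c' |A|) whenever t₀ ≤ 1. -/

import Mathlib

open MeasureTheory ProbabilityTheory Real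


lemma aux_antideriv (θ : ℝ) (x : ℝ) :
    ∫ t in (0:ℝ)..x, θ * Real.exp (θ * t) = Real.exp (θ * x) - 1 := by
  have h : ∀ t ∈ Set.uIcc (0:ℝ) x, HasDerivAt (fun u => Real.exp (θ * u))
      (θ * Real.exp (θ * t)) t := by
    intro t _
    have := (Real.hasDerivAt_exp (θ * t)).comp t ((hasDerivAt_id t).const_mul θ)
    simpa [mul_comm, Function.comp_def] using this
  have := intervalIntegral.integral_eq_sub_of_hasDerivAt h
    (Continuous.intervalIntegrable (by continuity) 0 x)
  simpa using this

lemma aux_exp_integral {b : ℝ} (hb : 0 < b) (θ : ℝ) :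
    ∫ t in Set.Ioi (0:ℝ), θ * Real.exp (-b * t) = θ / b := by
  rw [MeasureTheory.integral_const_mul]
  have h : (fun t : ℝ => Real.exp (-b * t)) = fun t => (fun x => Real.exp (-x)) (b * t) := by
    funext t; simp [neg_mul]
  rw [h, MeasureTheory.integral_comp_mul_left_Ioi (fun x => Real.exp (-x)) 0 hb]
  rw [mul_zero, integral_exp_neg_Ioi_zero]
  rw [smul_eq_mul]; ring

lemma aux_mgf_tail {Ω : Type} [MeasureSpace Ω] [IsProbabilityMeasure (ℙ : Measure Ω)]
    (X : Ω → ℝ) (hXm : Measurable X) (hX0 : ∀ ω, 0 ≤ X ω) {lam θ : ℝ} (hθ : 0 < θ)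
    (hθl : θ < lam)
    (htail : ∀ s : ℝ, 0 ≤ s → ℙ {ω | s < X ω} ≤ ENNReal.ofReal (Real.exp (-lam * s))) :
    Integrable (fun ω => Real.exp (θ * X ω)) ℙ ∧
      ProbabilityTheory.mgf X ℙ θ ≤ lam / (lam - θ) := by
  have hb : 0 < lam - θ := by linarith
  have lc := lintegral_comp_eq_lintegral_meas_lt_mul (ℙ : Measure Ω)
    (Filter.Eventually.of_forall hX0) hXm.aemeasurable
    (g := fun t => θ * Real.exp (θ * t))
    (fun t _ => Continuous.intervalIntegrable (by continuity) 0 t)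
    (Filter.Eventually.of_forall fun t => (mul_pos hθ (Real.exp_pos _)).le)
  have lc' : ∫⁻ ω, ENNReal.ofReal (Real.exp (θ * X ω) - 1) ∂ℙ
      = ∫⁻ t in Set.Ioi (0:ℝ), ℙ {a | t < X a} * ENNReal.ofReal (θ * Real.exp (θ * t)) := by
    rw [← lc]; congr 1; ext ω; rw [aux_antideriv]
  have h1 : ∫⁻ t in Set.Ioi (0:ℝ), ℙ {a | t < X a} * ENNReal.ofReal (θ * Real.exp (θ * t))
      ≤ ∫⁻ t in Set.Ioi (0:ℝ), ENNReal.ofReal (θ * Real.exp (-(lam - θ) * t)) := by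
    refine lintegral_mono_ae ?_
    filter_upwards [ae_restrict_mem measurableSet_Ioi] with t ht
    calc ℙ {a | t < X a} * ENNReal.ofReal (θ * Real.exp (θ * t))
        ≤ ENNReal.ofReal (Real.exp (-lam * t)) * ENNReal.ofReal (θ * Real.exp (θ * t)) :=
          mul_le_mul_left (htail t (le_of_lt ht)) _
      _ = ENNReal.ofReal (θ * Real.exp (-(lam - θ) * t)) := by
          rw [← ENNReal.ofReal_mul (Real.exp_pos _).le]
          congr 1
          rw [show Real.exp (-lam * t) * (θ * Real.exp (θ * t))
              = θ * (Real.exp (-lam * t) * Real.exp (θ * t)) by ring, ← Real.exp_add]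
          ring_nf
  have h2 : ∫⁻ t in Set.Ioi (0:ℝ), ENNReal.ofReal (θ * Real.exp (-(lam - θ) * t))
      = ENNReal.ofReal (θ / (lam - θ)) := by
    rw [← MeasureTheory.ofReal_integral_eq_lintegral_ofReal]
    · rw [aux_exp_integral hb θ]
    · exact (exp_neg_integrableOn_Ioi 0 hb).const_mul θ
    · exact Filter.Eventually.of_forall fun t => (mul_pos hθ (Real.exp_pos _)).le
  have key : ∫⁻ ω, ENNReal.ofReal (Real.exp (θ * X ω) - 1) ∂ℙ
      ≤ ENNReal.ofReal (θ / (lam - θ)) := by rw [lc']; exact h2 ▸ h1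
  have hsplit : ∀ ω, ENNReal.ofReal (Real.exp (θ * X ω))
      = ENNReal.ofReal (Real.exp (θ * X ω) - 1) + ENNReal.ofReal 1 := by
    intro ω
    have h1' : (1:ℝ) ≤ Real.exp (θ * X ω) :=
      Real.one_le_exp (mul_nonneg hθ.le (hX0 ω))
    rw [← ENNReal.ofReal_add (by linarith) zero_le_one]
    norm_num
  have hlint : ∫⁻ ω, ENNReal.ofReal (Real.exp (θ * X ω)) ∂ℙ
      ≤ ENNReal.ofReal (θ / (lam - θ)) + 1 := by
    simp_rw [hsplit]
    rw [lintegral_add_right _ measurable_const]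
    simp only [ENNReal.ofReal_one, lintegral_const, measure_univ, mul_one]
    exact add_le_add key le_rfl
  have hint : Integrable (fun ω => Real.exp (θ * X ω)) ℙ := by
    refine ⟨(hXm.const_mul θ).exp.aestronglyMeasurable, ?_⟩
    rw [hasFiniteIntegral_iff_ofReal (Filter.Eventually.of_forall fun ω => (Real.exp_pos _).le)]
    exact lt_of_le_of_lt hlint (by finiteness)
  refine ⟨hint, ?_⟩
  have hmgf : ProbabilityTheory.mgf X ℙ θ
      = (∫⁻ ω, ENNReal.ofReal (Real.exp (θ * X ω)) ∂ℙ).toReal := by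
    rw [ProbabilityTheory.mgf]
    rw [integral_eq_lintegral_of_nonneg_ae
      (Filter.Eventually.of_forall fun ω => (Real.exp_pos _).le)
      (hXm.const_mul θ).exp.aestronglyMeasurable]
  rw [hmgf]
  have := ENNReal.toReal_mono (by finiteness) hlint
  refine le_trans this ?_
  rw [ENNReal.toReal_add (by finiteness) (by finiteness), ENNReal.toReal_ofReal
    (div_nonneg hθ.le hb.le)]
  rw [ENNReal.toReal_one]
  rw [div_add' _ _ _ hb.ne', div_le_div_iff₀ hb hb]
  ring_nf
  nlinarith [hb]

lemma aux_bern {p x : ℝ} (hp : 0 < p) (hx0 : 0 < x) (hx : x ≤ 1/2) :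
    1 + p * x ≤ (1 - x) ^ (-p) := by
  have h1x : 0 < 1 - x := by linarith
  rw [Real.rpow_neg h1x.le]
  rcases le_or_gt 1 p with hp1 | hp1
  · have hd : (0:ℝ) ≤ x / (1 - x) := by positivity
    have key := one_add_mul_self_le_rpow_one_add (s := x / (1 - x)) (by linarith) hp1
    have he : (1 : ℝ) + x / (1 - x) = (1 - x)⁻¹ := by field_simp; ring
    rw [he, ← Real.rpow_neg_one (1 - x), ← Real.rpow_mul h1x.le] at key
    have hxd : x ≤ x / (1 - x) := by rw [le_div_iff₀ h1x]; nlinarith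
    have : ((1:ℝ) - x) ^ (-1 * p) = ((1 - x) ^ p)⁻¹ := by
      rw [show (-1 : ℝ) * p = -p by ring, Real.rpow_neg h1x.le]
    rw [this] at key
    nlinarith
  · have key := rpow_one_add_le_one_add_mul_self (s := -x) (by linarith) hp.le hp1.le
    have key' : (1 - x) ^ p ≤ 1 - p * x := by
      have h : (1 : ℝ) + -x = 1 - x := by ring
      rw [h] at key; linarith [key]
    have hpx : 0 < 1 - p * x := by nlinarith
    have hpow : 0 < (1 - x) ^ p := Real.rpow_pos_of_pos h1x p
    have h2 : ((1:ℝ) - p * x)⁻¹ ≤ ((1 - x) ^ p)⁻¹ := by gcongr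
    have hinv : (1 - p*x) * (1 - p*x)⁻¹ = 1 := mul_inv_cancel₀ hpx.ne'
    nlinarith [inv_pos.2 hpx, hinv, sq_nonneg (p*x)]

lemma aux_perterm {α : ℝ} (hα : 1 < α) {k : ℕ} (hk : 2 ≤ k) :
    ((k:ℝ) ^ α)⁻¹ ≤ (((k:ℝ) - 1) ^ (1 - α) - (k:ℝ) ^ (1 - α)) / (α - 1) := by
  set kr := (k:ℝ) with hkr
  have hk2 : (2:ℝ) ≤ kr := by rw [hkr]; exact_mod_cast hk
  have hkpos : (0:ℝ) < kr := by linarith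
  have hxle : kr⁻¹ ≤ 1/2 := by
    rw [inv_le_comm₀ hkpos (by norm_num)]; norm_num; linarith
  have hb := aux_bern (p := α - 1) (by linarith) (inv_pos.2 hkpos) hxle
  rw [show -(α - 1) = 1 - α by ring] at hb
  have h1k : (0:ℝ) < 1 - kr⁻¹ := by
    have : kr⁻¹ ≤ 1/2 := hxle
    linarith
  have hprod : kr ^ (1-α) * (1 - kr⁻¹) ^ (1-α) = (kr - 1) ^ (1-α) := by
    rw [← Real.mul_rpow hkpos.le h1k.le]
    congr 1
    field_simp
  have e1 : kr ^ (1-α) * kr⁻¹ = (kr ^ α)⁻¹ := by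
    rw [← Real.rpow_neg_one kr, ← Real.rpow_add hkpos, ← Real.rpow_neg hkpos.le]
    congr 1; ring
  have hm := mul_le_mul_of_nonneg_left hb (Real.rpow_pos_of_pos hkpos (1-α)).le
  have hm' : kr ^ (1-α) + (α - 1) * (kr ^ α)⁻¹ ≤ (kr - 1) ^ (1-α) := by
    have hexp : kr ^ (1-α) * (1 + (α-1) * kr⁻¹)
        = kr ^ (1-α) + (α-1) * (kr ^ (1-α) * kr⁻¹) := by ring
    rw [hexp, e1, hprod] at hm
    exact hm
  rw [le_div_iff₀ (by linarith : (0:ℝ) < α - 1)]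
  linarith

lemma aux_telescope {α : ℝ} (hα : 1 < α) (K : ℕ) (hK : 1 ≤ K) :
    ∀ n, K ≤ n → ∑ k ∈ Finset.Ioc K n, ((k:ℝ) ^ α)⁻¹
      ≤ ((K:ℝ) ^ (1-α) - (n:ℝ) ^ (1-α)) / (α - 1) := by
  intro n hn
  induction n, hn using Nat.le_induction with
  | base => simp
  | succ n hKn ih =>
    rw [Finset.sum_Ioc_succ_top hKn]
    have hpt := aux_perterm hα (k := n + 1) (by omega)
    have hc : ((n+1:ℕ):ℝ) - 1 = (n:ℝ) := by push_cast; ring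
    rw [hc] at hpt
    have := add_le_add ih hpt
    calc ∑ k ∈ Finset.Ioc K n, ((k:ℝ) ^ α)⁻¹ + (((n+1:ℕ):ℝ) ^ α)⁻¹
        ≤ ((K:ℝ) ^ (1-α) - (n:ℝ) ^ (1-α)) / (α - 1)
          + ((n:ℝ) ^ (1-α) - ((n+1:ℕ):ℝ) ^ (1-α)) / (α - 1) := this
      _ = ((K:ℝ) ^ (1-α) - ((n+1:ℕ):ℝ) ^ (1-α)) / (α - 1) := by
          rw [← add_div]; ring_nf

lemma aux_summable_ite {α : ℝ} (hα : 1 < α) (K : ℕ) :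
    Summable (fun k : ℕ => if K < k then ((k:ℝ) ^ α)⁻¹ else 0) := by
  refine Summable.of_nonneg_of_le (fun k => ?_) (fun k => ?_)
    (Real.summable_nat_rpow_inv.2 hα)
  · split <;> positivity
  · split
    · exact le_refl _
    · positivity
  
lemma aux_tail_tsum {α : ℝ} (hα : 1 < α) (K : ℕ) (hK : 1 ≤ K) :
    (∑' k : ℕ, if K < k then ((k:ℝ) ^ α)⁻¹ else 0) ≤ (K:ℝ) ^ (1-α) / (α - 1) := by
  refine (aux_summable_ite hα K).tsum_le_of_sum_le (fun s => ?_)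
  set n := max (s.sup id) K with hn
  have hsub : s.filter (fun k => K < k) ⊆ Finset.Ioc K n := by
    intro k hk
    rw [Finset.mem_filter] at hk
    rw [Finset.mem_Ioc]
    exact ⟨hk.2, le_trans (Finset.le_sup (f := id) hk.1) (le_max_left _ _)⟩
  calc ∑ k ∈ s, (if K < k then ((k:ℝ) ^ α)⁻¹ else 0)
      = ∑ k ∈ s.filter (fun k => K < k), ((k:ℝ) ^ α)⁻¹ := (Finset.sum_filter _ _).symm
    _ ≤ ∑ k ∈ Finset.Ioc K n, ((k:ℝ) ^ α)⁻¹ :=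
        Finset.sum_le_sum_of_subset_of_nonneg hsub (fun i _ _ => by positivity)
    _ ≤ ((K:ℝ) ^ (1-α) - (n:ℝ) ^ (1-α)) / (α - 1) :=
        aux_telescope hα K hK n (le_max_right _ _)
    _ ≤ (K:ℝ) ^ (1-α) / (α - 1) := by
        have h1 : (0:ℝ) ≤ (n:ℝ) ^ (1-α) := Real.rpow_nonneg (Nat.cast_nonneg n) _
        have h2 : (0:ℝ) < α - 1 := by linarith
        rw [div_le_div_iff_of_pos_right h2]
        linarith

lemma aux_inv_le_exp {x : ℝ} (hx0 : 0 ≤ x) (hx : x ≤ 1/4) :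
    (1 - x)⁻¹ ≤ Real.exp (3/2 * x) := by
  have h1x : (0:ℝ) < 1 - x := by linarith
  rw [inv_eq_one_div, div_le_iff₀ h1x]
  nlinarith [Real.add_one_le_exp (3/2 * x), sq_nonneg x]

lemma aux_part1 (c α : ℝ) (hc : 0 < c) (hα : 1 < α) (A : ℝ) (hA : 1 ≤ A)
    (t₀ : ℝ) (ht₀ : 0 < t₀)
    (Ω : Type) [MeasureSpace Ω] [IsProbabilityMeasure (ℙ : Measure Ω)]
    (q₀ : ℕ) (H : ℕ → Ω → ℝ) (Q : ℝ → Ω → ℕ)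
    (hHm : ∀ i, Measurable (H i)) (hH0 : ∀ i ω, 0 ≤ H i ω)
    (hind : iIndepFun H ℙ)
    (htail : ∀ i : ℕ, 1 ≤ i → ∀ s : ℝ, 0 ≤ s →
      ℙ {ω | s < H i ω} ≤ ENNReal.ofReal (Real.exp (-(c * A ^ (1 - α) * (i : ℝ) ^ α) * s)))
    (hQ : ∀ t : ℝ, 0 ≤ t → ∀ ω, ∀ m : ℕ,
      (Q t ω ≤ m ↔ ∑ k ∈ Finset.Icc (m + 1) q₀, H k ω ≤ t))
    (K : ℕ) (hK : 1 ≤ K)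
    (hsum : (∑' k : ℕ, if K < k then (c * A ^ (1 - α) * (k : ℝ) ^ α)⁻¹ else 0) < t₀ / 2) :
    ℙ {ω | K < Q t₀ ω} ≤ ENNReal.ofReal (Real.exp (-((8 * (2:ℝ)^α)⁻¹) * K)) := by
  have hA0 : (0:ℝ) < A := by linarith
  set lam : ℕ → ℝ := fun k => c * A ^ (1 - α) * (k:ℝ) ^ α with hlam
  have hCA : 0 < c * A ^ (1 - α) := mul_pos hc (Real.rpow_pos_of_pos hA0 _)
  have hlam_pos : ∀ k : ℕ, 1 ≤ k → 0 < lam k := fun k hk =>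
    mul_pos hCA (Real.rpow_pos_of_pos (by exact_mod_cast hk : (0:ℝ) < k) _)
  have hlam_mono : ∀ k m : ℕ, k ≤ m → lam k ≤ lam m := fun k m hkm => by
    apply mul_le_mul_of_nonneg_left _ hCA.le
    exact Real.rpow_le_rpow (Nat.cast_nonneg k) (by exact_mod_cast hkm) (by linarith)
  set θ : ℝ := lam (K+1) / 4 with hθdef
  have hlamK : 0 < lam (K+1) := hlam_pos (K+1) (by omega)
  have hθ : 0 < θ := by positivity
  -- finite sums of inverse rates are at most t₀/2
  have hfin : ∀ s : Finset ℕ, (∀ k ∈ s, K < k) → ∑ k ∈ s, (lam k)⁻¹ ≤ t₀ / 2 := by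
    intro s hs
    set f : ℕ → ℝ := fun k => if K < k then (lam k)⁻¹ else 0 with hf
    have hfs : Summable f := by
      have : f = fun k => (c * A ^ (1-α))⁻¹ * (if K < k then ((k:ℝ) ^ α)⁻¹ else 0) := by
        funext k
        simp only [hf]
        split
        · rw [mul_inv]
        · rw [mul_zero]
      rw [this]
      exact (aux_summable_ite hα K).mul_left _
    have he : ∑ k ∈ s, (lam k)⁻¹ = ∑ k ∈ s, f k :=
      Finset.sum_congr rfl fun k hk => by simp [hf, hs k hk]
    rw [he]
    refine le_trans (hfs.sum_le_tsum s (fun i _ => ?_)) hsum.le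
    simp only [hf]; split
    · exact inv_nonneg.2 (hlam_pos i (by omega)).le
    · exact le_refl 0
  -- lower bound on lam (K+1) * t₀
  have hKt : 2 * (K:ℝ) / (2:ℝ)^α ≤ lam (K+1) * t₀ := by
    have hlam2K : 0 < lam (2*K) := hlam_pos _ (by omega)
    have h1 : (K:ℝ) * (lam (2*K))⁻¹ ≤ ∑ k ∈ Finset.Icc (K+1) (2*K), (lam k)⁻¹ := by
      have hcard : (Finset.Icc (K+1) (2*K)).card = K := by
        rw [Nat.card_Icc]; omega
      calc (K:ℝ) * (lam (2*K))⁻¹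
          = (Finset.Icc (K+1) (2*K)).card • (lam (2*K))⁻¹ := by
            rw [hcard, nsmul_eq_mul]
        _ ≤ ∑ k ∈ Finset.Icc (K+1) (2*K), (lam k)⁻¹ := by
            apply Finset.card_nsmul_le_sum
            intro k hk
            rw [Finset.mem_Icc] at hk
            exact inv_anti₀ (hlam_pos k (by omega)) (hlam_mono k (2*K) hk.2)
    have h2 : (K:ℝ) * (lam (2*K))⁻¹ ≤ t₀ / 2 :=
      le_trans h1 (hfin _ (fun k hk => by rw [Finset.mem_Icc] at hk; omega))
    have h3 : lam (2*K) ≤ (2:ℝ)^α * lam (K+1) := by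
      simp only [hlam]
      rw [show (2:ℝ)^α * (c * A ^ (1-α) * ((K+1:ℕ):ℝ)^α)
          = c * A ^ (1-α) * ((2:ℝ)^α * ((K+1:ℕ):ℝ)^α) by ring]
      apply mul_le_mul_of_nonneg_left _ hCA.le
      rw [← Real.mul_rpow (by norm_num) (Nat.cast_nonneg _)]
      apply Real.rpow_le_rpow (Nat.cast_nonneg _) _ (by linarith)
      push_cast; linarith
    have h2α : (0:ℝ) < (2:ℝ)^α := Real.rpow_pos_of_pos (by norm_num) _
    -- from h2 : K / lam2K ≤ t₀/2 and h3 : lam2K ≤ 2^α lamK1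
    have h4 : 2 * (K:ℝ) ≤ t₀ * lam (2*K) := by
      have := mul_le_mul_of_nonneg_right h2 (by positivity : (0:ℝ) ≤ 2 * lam (2*K))
      have hinv : lam (2*K) * (lam (2*K))⁻¹ = 1 := mul_inv_cancel₀ hlam2K.ne'
      nlinarith
    calc 2 * (K:ℝ) / (2:ℝ)^α ≤ t₀ * lam (2*K) / (2:ℝ)^α := by
          gcongr
      _ ≤ lam (K+1) * t₀ := by
          rw [div_le_iff₀ h2α]
          nlinarith [mul_le_mul_of_nonneg_left h3 ht₀.le]
  -- event identification
  have hev : {ω | K < Q t₀ ω} = {ω | t₀ < ∑ k ∈ Finset.Icc (K+1) q₀, H k ω} := by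
    ext ω
    simp only [Set.mem_setOf_eq]
    rw [← not_le, ← not_le, hQ t₀ ht₀.le ω K]
  set s : Finset ℕ := Finset.Icc (K+1) q₀ with hs
  have hsK : ∀ k ∈ s, K < k := fun k hk => by
    rw [hs, Finset.mem_Icc] at hk; omega
  -- mgf bounds for each k ∈ s
  have hmgf : ∀ k ∈ s, Integrable (fun ω => Real.exp (θ * H k ω)) ℙ ∧
      ProbabilityTheory.mgf (H k) ℙ θ ≤ lam k / (lam k - θ) := by
    intro k hk
    have hk1 : 1 ≤ k := by have := hsK k hk; omega
    have hθk : θ < lam k := by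
      have h1 : lam (K+1) ≤ lam k := hlam_mono (K+1) k (by have := hsK k hk; omega)
      rw [hθdef]; linarith
    exact aux_mgf_tail (H k) (hHm k) (hH0 k) hθ hθk (htail k hk1)
  have hInt : Integrable (fun ω => Real.exp (θ * (∑ k ∈ s, H k) ω)) ℙ :=
    hind.integrable_exp_mul_sum hHm (fun k hk => (hmgf k hk).1)
  have hch := measure_ge_le_exp_mul_mgf (μ := (ℙ : Measure Ω)) (X := ∑ k ∈ s, H k)
    t₀ hθ.le hInt
  rw [hind.mgf_sum hHm s] at hch
  -- bound the product of mgfs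
  have hprod : ∏ k ∈ s, ProbabilityTheory.mgf (H k) ℙ θ ≤ Real.exp (3*θ/2 * (t₀/2)) := by
    calc ∏ k ∈ s, ProbabilityTheory.mgf (H k) ℙ θ
        ≤ ∏ k ∈ s, Real.exp (3/2 * (θ * (lam k)⁻¹)) := by
          apply Finset.prod_le_prod (fun k _ => ProbabilityTheory.mgf_nonneg)
          intro k hk
          have hk1 : 1 ≤ k := by have := hsK k hk; omega
          have hlamk : 0 < lam k := hlam_pos k hk1
          have hx4 : θ * (lam k)⁻¹ ≤ 1/4 := by
            have h1 : lam (K+1) ≤ lam k := hlam_mono (K+1) k (by have := hsK k hk; omega)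
            have h2 : θ * (lam k)⁻¹ ≤ θ * (lam (K+1))⁻¹ := by
              apply mul_le_mul_of_nonneg_left _ hθ.le
              exact inv_anti₀ hlamK h1
            have h3 : θ * (lam (K+1))⁻¹ = 1/4 := by
              rw [hθdef]; field_simp
            linarith
          have hθk : θ < lam k := by
            have h1 : lam (K+1) ≤ lam k := hlam_mono (K+1) k (by have := hsK k hk; omega)
            rw [hθdef]; linarith
          have heq : lam k / (lam k - θ) = (1 - θ * (lam k)⁻¹)⁻¹ := by
            rw [show (1:ℝ) - θ * (lam k)⁻¹ = (lam k - θ) * (lam k)⁻¹ by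
              field_simp]
            rw [mul_inv, inv_inv]
            ring
          calc ProbabilityTheory.mgf (H k) ℙ θ ≤ lam k / (lam k - θ) := (hmgf k hk).2
            _ = (1 - θ * (lam k)⁻¹)⁻¹ := heq
            _ ≤ Real.exp (3/2 * (θ * (lam k)⁻¹)) :=
                aux_inv_le_exp (by positivity) hx4
      _ = Real.exp (∑ k ∈ s, 3/2 * (θ * (lam k)⁻¹)) := (Real.exp_sum s _).symm
      _ ≤ Real.exp (3*θ/2 * (t₀/2)) := by
          apply Real.exp_le_exp.2
          have h1 : ∑ k ∈ s, 3/2 * (θ * (lam k)⁻¹) = 3*θ/2 * ∑ k ∈ s, (lam k)⁻¹ := by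
            rw [Finset.mul_sum]; apply Finset.sum_congr rfl; intro k _; ring
          rw [h1]
          apply mul_le_mul_of_nonneg_left (hfin s hsK) (by positivity)
  -- assemble real bound
  have hreal : (ℙ {ω | t₀ ≤ (∑ k ∈ s, H k) ω}).toReal
      ≤ Real.exp (-((8 * (2:ℝ)^α)⁻¹) * K) := by
    have h2α : (0:ℝ) < (2:ℝ)^α := Real.rpow_pos_of_pos (by norm_num) _
    calc (ℙ {ω | t₀ ≤ (∑ k ∈ s, H k) ω}).toReal
        ≤ Real.exp (-θ * t₀) * ∏ k ∈ s, ProbabilityTheory.mgf (H k) ℙ θ := hch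
      _ ≤ Real.exp (-θ * t₀) * Real.exp (3*θ/2 * (t₀/2)) := by
          apply mul_le_mul_of_nonneg_left hprod (Real.exp_pos _).le
      _ = Real.exp (-(θ * t₀)/4) := by rw [← Real.exp_add]; ring_nf
      _ ≤ Real.exp (-((8 * (2:ℝ)^α)⁻¹) * K) := by
          apply Real.exp_le_exp.2
          have hθt : θ * t₀ = lam (K+1) * t₀ / 4 := by rw [hθdef]; ring
          rw [hθt]
          have : 2 * (K:ℝ) / (2:ℝ)^α / 16 ≤ lam (K+1) * t₀ / 16 := by linarith
          have he : -((8 * (2:ℝ)^α)⁻¹) * K = -(2 * (K:ℝ) / (2:ℝ)^α / 16) := by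
            field_simp; ring
          rw [he]
          linarith
  -- conclude in ℝ≥0∞
  rw [hev]
  have hsub : {ω | t₀ < ∑ k ∈ Finset.Icc (K+1) q₀, H k ω}
      ⊆ {ω | t₀ ≤ (∑ k ∈ s, H k) ω} := by
    intro ω hω
    simp only [Set.mem_setOf_eq, Finset.sum_apply]
    exact le_of_lt hω
  calc ℙ {ω | t₀ < ∑ k ∈ Finset.Icc (K+1) q₀, H k ω}
      ≤ ℙ {ω | t₀ ≤ (∑ k ∈ s, H k) ω} := measure_mono hsub
    _ = ENNReal.ofReal ((ℙ {ω | t₀ ≤ (∑ k ∈ s, H k) ω}).toReal) :=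
        (ENNReal.ofReal_toReal (measure_ne_top _ _)).symm
    _ ≤ ENNReal.ofReal (Real.exp (-((8 * (2:ℝ)^α)⁻¹) * K)) :=
        ENNReal.ofReal_le_ofReal hreal

-- the strict sum condition for the specific K
lemma aux_part2_sum (c α : ℝ) (hc : 0 < c) (hα : 1 < α) (A : ℝ) (hA : 1 ≤ A)
    (t₀ : ℝ) (ht₀ : 0 < t₀) (ht₁ : t₀ ≤ 1) :
    (∑' k : ℕ, if (⌈((1 + 2/(c*(α-1))) ^ (α-1)⁻¹ + 1) * t₀ ^ (-(1:ℝ)/(α-1)) * A⌉₊ : ℕ) < k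
        then (c * A ^ (1 - α) * (k : ℝ) ^ α)⁻¹ else 0) < t₀ / 2 := by
  have hA0 : (0:ℝ) < A := by linarith
  set β := α - 1 with hβdef
  have hβ : 0 < β := by rw [hβdef]; linarith
  set B : ℝ := 1 + 2/(c*β) with hB
  have hB1 : (1:ℝ) ≤ B := by
    rw [hB]; have : 0 < 2/(c*β) := by positivity
    linarith
  set C : ℝ := B ^ β⁻¹ + 1 with hC
  have hBe : (0:ℝ) < B ^ β⁻¹ := Real.rpow_pos_of_pos (by linarith) _
  have hC1 : (1:ℝ) ≤ C := by rw [hC]; linarith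
  set T : ℝ := t₀ ^ (-(1:ℝ)/β) with hT
  have hT1 : (1:ℝ) ≤ T :=
    Real.one_le_rpow_of_pos_of_le_one_of_nonpos ht₀ ht₁
      (by apply le_of_lt; apply div_neg_of_neg_of_pos <;> [norm_num; exact hβ])
  have hCTA : (0:ℝ) < C * T * A := by positivity
  set K : ℕ := ⌈C * T * A⌉₊ with hK
  have hK1 : 1 ≤ K := Nat.one_le_ceil_iff.2 hCTA
  have hKge : C * T * A ≤ (K:ℝ) := Nat.le_ceil _
  have hKpos : (0:ℝ) < (K:ℝ) := by exact_mod_cast hK1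
  -- rewrite the tsum
  have hrw : (fun k : ℕ => if K < k then (c * A ^ (1 - α) * (k : ℝ) ^ α)⁻¹ else 0)
      = fun k : ℕ => (c * A ^ (1-α))⁻¹ * (if K < k then ((k:ℝ) ^ α)⁻¹ else 0) := by
    funext k; split
    · rw [mul_inv]
    · rw [mul_zero]
  have hCA : (0:ℝ) < c * A ^ (1-α) := mul_pos hc (Real.rpow_pos_of_pos hA0 _)
  have hbound : (∑' k : ℕ, if K < k then (c * A ^ (1 - α) * (k : ℝ) ^ α)⁻¹ else 0)
      ≤ (c * A ^ (1-α))⁻¹ * ((K:ℝ) ^ (1-α) / (α - 1)) := by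
    rw [hrw, tsum_mul_left]
    exact mul_le_mul_of_nonneg_left (aux_tail_tsum hα K hK1) (by positivity)
  refine lt_of_le_of_lt hbound ?_
  -- now the strict inequality
  have hAβ : (0:ℝ) < A ^ β := Real.rpow_pos_of_pos hA0 _
  have hKβpos : (0:ℝ) < (K:ℝ) ^ β := Real.rpow_pos_of_pos hKpos _
  have hTβ : T ^ β = t₀⁻¹ := by
    rw [hT, ← Real.rpow_mul ht₀.le]
    rw [show -(1:ℝ)/β * β = -1 by field_simp]
    exact Real.rpow_neg_one t₀
  have hCβ : B ≤ C ^ β := by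
    calc B = (B ^ β⁻¹) ^ β := by
          rw [← Real.rpow_mul (by linarith), inv_mul_cancel₀ hβ.ne', Real.rpow_one]
      _ ≤ C ^ β := Real.rpow_le_rpow hBe.le (by rw [hC]; linarith) hβ.le
  have hKβ : 2 * A ^ β / (c * β * t₀) < (K:ℝ) ^ β := by
    have h1 : (C * T * A) ^ β ≤ (K:ℝ) ^ β := Real.rpow_le_rpow (by positivity) hKge hβ.le
    have h2 : (C * T * A) ^ β = C ^ β * T ^ β * A ^ β := by
      rw [Real.mul_rpow (by positivity) hA0.le, Real.mul_rpow (by positivity) (by positivity)]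
    have h3 : B * t₀⁻¹ * A ^ β ≤ C ^ β * T ^ β * A ^ β := by
      rw [hTβ]
      apply mul_le_mul_of_nonneg_right _ hAβ.le
      apply mul_le_mul_of_nonneg_right hCβ (by positivity)
    have h4 : 2 * A ^ β / (c * β * t₀) < B * t₀⁻¹ * A ^ β := by
      rw [hB]
      rw [div_lt_iff₀ (by positivity)]
      have ht₀inv : t₀ * t₀⁻¹ = 1 := mul_inv_cancel₀ ht₀.ne'
      have hcβ : (c * β) ≠ 0 := by positivity
      field_simp
      nlinarith [hAβ, mul_pos hc hβ, mul_pos (mul_pos hc hβ) ht₀]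
    linarith [h1, h2 ▸ h1, h3, h4]
  -- conclude
  have hc1 : (c * A ^ (1-α))⁻¹ * ((K:ℝ) ^ (1-α) / (α - 1))
      = c⁻¹ * A ^ β * ((K:ℝ) ^ β)⁻¹ / β := by
    rw [show (1:ℝ) - α = -β by rw [hβdef]; ring]
    rw [Real.rpow_neg hA0.le, Real.rpow_neg hKpos.le, mul_inv, inv_inv]
    ring
  rw [hc1]
  have h5 : ((K:ℝ) ^ β)⁻¹ < (2 * A ^ β / (c * β * t₀))⁻¹ :=
    inv_strictAnti₀ (by positivity) hKβ
  calc c⁻¹ * A ^ β * ((K:ℝ) ^ β)⁻¹ / β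
      < c⁻¹ * A ^ β * (2 * A ^ β / (c * β * t₀))⁻¹ / β := by
        gcongr c⁻¹ * A ^ β * ?_ / β
    _ = t₀ / 2 := by
        field_simp

/-- consider a pure death chain `Q` on the nonnegative integers
jumping from `i` to `i−1` at rate at least `c·A^{1−α}·i^α` (`c > 0`, `α > 1`,
`A ≥ 1`), encoded by its holding times `H i` at each state `i` (independent, with
tails dominated by the exponential of rate `c·A^{1−α}·i^α`): starting from `q₀`,
`Q t ≤ m` iff `Σ_{m<k≤q₀} H k ≤ t`. Then there is `c₃ > 0` (depending on `c, α`)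
such that `P(Q_{t₀} > K) ≤ exp(−c₃K)` whenever
`Σ_{k>K} (c·A^{1−α}·k^α)^{−1} < t₀/2`; in particular there are `C, c' > 0`
(depending on `c, α`) such that, with `K = ⌈C t₀^{−1/(α−1)} A⌉`,
`P(Q_{t₀} > K) ≤ exp(−c' A)` whenever `t₀ ≤ 1`. -/
theorem stmt19 (c α : ℝ) (hc : 0 < c) (hα : 1 < α) :
    ∃ c₃ > (0 : ℝ), ∃ C > (0 : ℝ), ∃ c' > (0 : ℝ),
      ∀ (A : ℝ), 1 ≤ A → ∀ (t₀ : ℝ), 0 < t₀ →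
      ∀ (Ω : Type) [MeasureSpace Ω] [IsProbabilityMeasure (ℙ : Measure Ω)]
        (q₀ : ℕ) (H : ℕ → Ω → ℝ) (Q : ℝ → Ω → ℕ),
        (∀ i, Measurable (H i)) →
        (∀ i ω, 0 ≤ H i ω) →
        iIndepFun H ℙ →
        (∀ i : ℕ, 1 ≤ i → ∀ s : ℝ, 0 ≤ s →
          ℙ {ω | s < H i ω}
            ≤ ENNReal.ofReal (Real.exp (-(c * A ^ (1 - α) * (i : ℝ) ^ α) * s))) →
        (∀ t : ℝ, 0 ≤ t → ∀ ω, ∀ m : ℕ,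
          (Q t ω ≤ m ↔ ∑ k ∈ Finset.Icc (m + 1) q₀, H k ω ≤ t)) →
        (∀ K : ℕ, 1 ≤ K →
          (∑' k : ℕ, if K < k then (c * A ^ (1 - α) * (k : ℝ) ^ α)⁻¹ else 0) < t₀ / 2 →
          ℙ {ω | K < Q t₀ ω} ≤ ENNReal.ofReal (Real.exp (-c₃ * K))) ∧
        (t₀ ≤ 1 →
          ℙ {ω | (⌈C * t₀ ^ (-(1 : ℝ) / (α - 1)) * A⌉₊ : ℕ) < Q t₀ ω}
            ≤ ENNReal.ofReal (Real.exp (-c' * A))) := by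
  have h2α : (0:ℝ) < (2:ℝ)^α := Real.rpow_pos_of_pos (by norm_num) _
  have hβ : (0:ℝ) < α - 1 := by linarith
  refine ⟨(8 * (2:ℝ)^α)⁻¹, by positivity,
    (1 + 2/(c*(α-1))) ^ (α-1)⁻¹ + 1,
    by positivity,
    (8 * (2:ℝ)^α)⁻¹, by positivity, ?_⟩
  intro A hA t₀ ht₀ Ω _ _ q₀ H Q hHm hH0 hind htail hQ
  constructor
  · intro K hK hsum
    exact aux_part1 c α hc hα A hA t₀ ht₀ Ω q₀ H Q hHm hH0 hind htail hQ K hK hsum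
  · intro ht₁
    have hA0 : (0:ℝ) < A := by linarith
    set C : ℝ := (1 + 2/(c*(α-1))) ^ (α-1)⁻¹ + 1 with hC
    set T : ℝ := t₀ ^ (-(1:ℝ)/(α-1)) with hT
    have hBe : (0:ℝ) < (1 + 2/(c*(α-1))) ^ (α-1)⁻¹ :=
      Real.rpow_pos_of_pos (by positivity) _
    have hB1 : (1:ℝ) ≤ (1 + 2/(c*(α-1))) ^ (α-1)⁻¹ := by
      have h2 : (0:ℝ) < 2/(c*(α-1)) := by positivity
      calc (1:ℝ) = (1:ℝ) ^ (α-1)⁻¹ := (Real.one_rpow _).symm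
        _ ≤ (1 + 2/(c*(α-1))) ^ (α-1)⁻¹ :=
            Real.rpow_le_rpow (by norm_num) (by linarith) (by positivity)
    have hC1 : (1:ℝ) ≤ C := by rw [hC]; linarith
    have hT1 : (1:ℝ) ≤ T :=
      Real.one_le_rpow_of_pos_of_le_one_of_nonpos ht₀ ht₁
        (by apply le_of_lt; apply div_neg_of_neg_of_pos <;> [norm_num; exact hβ])
    have hCTA : (0:ℝ) < C * T * A := by positivity
    set K : ℕ := ⌈C * T * A⌉₊ with hK
    have hK1 : 1 ≤ K := Nat.one_le_ceil_iff.2 hCTA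
    have hKA : A ≤ (K:ℝ) := by
      have h1 : C * T * A ≤ (K:ℝ) := Nat.le_ceil _
      have hCT : (1:ℝ)*1 ≤ C*T := mul_le_mul hC1 hT1 zero_le_one (by linarith)
      nlinarith
    have hsum := aux_part2_sum c α hc hα A hA t₀ ht₀ ht₁
    have h1 := aux_part1 c α hc hα A hA t₀ ht₀ Ω q₀ H Q hHm hH0 hind htail hQ K hK1 hsum
    refine le_trans h1 (ENNReal.ofReal_le_ofReal (Real.exp_le_exp.2 ?_))
    have hc3 : (0:ℝ) < (8 * (2:ℝ)^α)⁻¹ := by positivity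
    rw [neg_mul, neg_mul, neg_le_neg_iff]
    exact mul_le_mul_of_nonneg_left hKA hc3.le
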